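/- arXiv:1203.1108 — 2 statements merged into one kernel-verified Lean document; each statement's English description precedes it below -/
import Mathlib

section
/- Let k be an algebraically closed field and let σ₁, σ₂ ∈ k[t] be nonconstant tamely ramified polynomials of degrees d₁ > d₂. If ω = f·(dt)^ν is a semi-invariant form of weight ν ≥ 1 for (σ₁, σ₂), then its conductor C (the number of a ∈ k with ord_a f ≠ 0) satisfies C ≤ 2 + 3(d₂ − 1)/(d₁ − d₂), i.e. C·(d₁ − d₂) ≤ 2(d₁ − d₂) + 3(d₂ − 1). -/
open Polynomial

/-- Substitution of a polynomial `σ` into a rational function `h`: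
if `h = p/q` then `h ∘ σ = (p ∘ σ)/(q ∘ σ)`. -/
noncomputable def ratComp {k : Type*} [Field k] (h : RatFunc k) (σ : k[X]) : RatFunc k :=
  algebraMap k[X] (RatFunc k) (h.num.comp σ) / algebraMap k[X] (RatFunc k) (h.denom.comp σ)

/-- The order of a rational function `f` at a point `a` of the affine line. -/
noncomputable def ordAt {k : Type*} [Field k] (f : RatFunc k) (a : k) : ℤ :=
  (f.num.rootMultiplicity a : ℤ) - (f.denom.rootMultiplicity a : ℤ)

/-- `f·(dt)^ν` is a semi-invariant form of weight `ν` for the correspondence `(σ₁, σ₂)`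
of the affine line: `f ≠ 0` and `σ₁*ω = λ·σ₂*ω` for some constant `λ ≠ 0`, i.e.
`(f∘σ₁)·(σ₁')^ν = λ·(f∘σ₂)·(σ₂')^ν`. -/
def SemiInvariant {k : Type*} [Field k] (σ₁ σ₂ : k[X]) (f : RatFunc k) (ν : ℤ) : Prop :=
  f ≠ 0 ∧ ∃ lam : k, lam ≠ 0 ∧
    ratComp f σ₁ * (algebraMap k[X] (RatFunc k) (derivative σ₁)) ^ ν
      = RatFunc.C lam *
        (ratComp f σ₂ * (algebraMap k[X] (RatFunc k) (derivative σ₂)) ^ ν)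

/-- A nonconstant polynomial `σ` is tamely ramified if `char k` does not divide its degree
and every root of `σ - c`, for every `c`, has multiplicity prime to `char k`. -/
def TamelyRamified {k : Type*} [Field k] (σ : k[X]) : Prop :=
  ¬ (ringChar k ∣ σ.natDegree) ∧
    ∀ c a : k, (σ - C c).IsRoot a → ¬ (ringChar k ∣ (σ - C c).rootMultiplicity a)

section Aux

variable {k : Type*} [Field k]

lemma aux_sub_C_ne_zero {σ : k[X]} (h : 0 < σ.natDegree) (s : k) : σ - C s ≠ 0 := by
  intro h0
  have : (σ - C s).natDegree = σ.natDegree := natDegree_sub_C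
  rw [h0, natDegree_zero] at this
  omega

lemma aux_comp_ne_zero {p σ : k[X]} (hp : p ≠ 0) (hσ : 0 < σ.natDegree) : p.comp σ ≠ 0 := by
  rw [Ne, comp_eq_zero_iff]
  push_neg
  refine ⟨hp, fun _ => ?_⟩
  intro hC
  rw [hC] at hσ
  simp at hσ

lemma aux_rm_pow (a : k) (q : k[X]) (n : ℕ) :
    (q ^ n).rootMultiplicity a = n * q.rootMultiplicity a := by
  classical
  rcases eq_or_ne q 0 with rfl | hq
  · rcases Nat.eq_zero_or_pos n with rfl | hn
    · simp
    · simp [zero_pow hn.ne', rootMultiplicity_zero]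
  · rw [← count_roots, ← count_roots, roots_pow, Multiset.count_nsmul]

lemma aux_rootMultiplicity_comp {p σ : k[X]} (hp : p ≠ 0) (hσ : 0 < σ.natDegree) (a : k) :
    (p.comp σ).rootMultiplicity a
      = p.rootMultiplicity (σ.eval a) * (σ - C (σ.eval a)).rootMultiplicity a := by
  obtain ⟨u, hu, hnd⟩ := p.exists_eq_pow_rootMultiplicity_mul_and_not_dvd hp (σ.eval a)
  set b := σ.eval a with hb
  set m := p.rootMultiplicity b with hm
  have hσb : σ - C b ≠ 0 := aux_sub_C_ne_zero hσ b
  have hu0 : u ≠ 0 := by rintro rfl; exact hnd (dvd_zero _)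
  have hucomp : u.comp σ ≠ 0 := aux_comp_ne_zero hu0 hσ
  have hcomp : p.comp σ = (σ - C b) ^ m * u.comp σ := by
    conv_lhs => rw [hu]
    simp [mul_comp, pow_comp, sub_comp]
  rw [hcomp, rootMultiplicity_mul (mul_ne_zero (pow_ne_zero _ hσb) hucomp)]
  have h2 : (u.comp σ).rootMultiplicity a = 0 := by
    apply rootMultiplicity_eq_zero
    simp only [IsRoot, eval_comp, ← hb]
    intro hub
    exact hnd (dvd_iff_isRoot.mpr hub)
  rw [aux_rm_pow, h2, add_zero]

lemma aux_cast_ne_zero {n : ℕ} (h : ¬ (ringChar k ∣ n)) : (n : k) ≠ 0 := by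
  rw [Ne, ringChar.spec]
  exact h

lemma tame_deriv {σ : k[X]} (hσ : 0 < σ.natDegree) (ht : TamelyRamified σ) (a : k) :
    (derivative σ).rootMultiplicity a + 1 = (σ - C (σ.eval a)).rootMultiplicity a := by
  set c := σ.eval a with hc
  have hroot : (σ - C c).IsRoot a := by simp [IsRoot, hc]
  have hτ : σ - C c ≠ 0 := aux_sub_C_ne_zero hσ c
  have he := ht.2 c a hroot
  have hpos : 0 < (σ - C c).rootMultiplicity a := (rootMultiplicity_pos hτ).2 hroot
  have hne : (((σ - C c).rootMultiplicity a : k)) ≠ 0 := aux_cast_ne_zero he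
  have hkey := derivative_rootMultiplicity_of_root_of_mem_nonZeroDivisors hroot
    (mem_nonZeroDivisors_of_ne_zero hne)
  rw [derivative_sub, derivative_C, sub_zero] at hkey
  omega

lemma tame_deriv_ne_zero {σ : k[X]} (hσ : 0 < σ.natDegree)
    (ht : ¬ (ringChar k ∣ σ.natDegree)) :
    derivative σ ≠ 0 ∧ (derivative σ).natDegree = σ.natDegree - 1 := by
  have hσ0 : σ ≠ 0 := by intro h0; simp [h0] at hσ
  have hco : (derivative σ).coeff (σ.natDegree - 1) ≠ 0 := by
    rw [coeff_derivative]
    have h1 : σ.natDegree - 1 + 1 = σ.natDegree := by omega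
    rw [h1]
    apply mul_ne_zero
    · rw [← leadingCoeff]; exact leadingCoeff_ne_zero.mpr hσ0
    · have : ((σ.natDegree - 1 + 1 : ℕ) : k) ≠ 0 := by rw [h1]; exact aux_cast_ne_zero ht
      push_cast at this
      exact_mod_cast this
  have hd0 : derivative σ ≠ 0 := fun h => hco (by simp [h])
  refine ⟨hd0, le_antisymm ?_ (le_natDegree_of_ne_zero hco)⟩
  have := natDegree_derivative_lt (p := σ) (by omega)
  omega

lemma semiInvariant_poly_eq {σ₁ σ₂ : k[X]} {f : RatFunc k} {ν : ℤ} (n : ℕ)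
    (hn : (n : ℤ) = ν) (h₁ : 0 < σ₁.natDegree) (h₂ : 0 < σ₂.natDegree)
    (hf : SemiInvariant σ₁ σ₂ f ν) :
    ∃ lam : k, lam ≠ 0 ∧
      f.num.comp σ₁ * f.denom.comp σ₂ * (derivative σ₁) ^ n
        = C lam * (f.num.comp σ₂ * f.denom.comp σ₁ * (derivative σ₂) ^ n) := by
  obtain ⟨hf0, lam, hlam, heq⟩ := hf
  refine ⟨lam, hlam, ?_⟩
  set φ := algebraMap k[X] (RatFunc k) with hφ
  have hinj : Function.Injective φ := IsFractionRing.injective k[X] (RatFunc k)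
  apply hinj
  have hq1 : φ (f.denom.comp σ₁) ≠ 0 :=
    RatFunc.algebraMap_ne_zero (aux_comp_ne_zero f.denom_ne_zero h₁)
  have hq2 : φ (f.denom.comp σ₂) ≠ 0 :=
    RatFunc.algebraMap_ne_zero (aux_comp_ne_zero f.denom_ne_zero h₂)
  rw [ratComp, ratComp, ← hφ, ← hn, zpow_natCast, zpow_natCast] at heq
  push_cast [map_mul, map_pow, RatFunc.algebraMap_C]
  field_simp at heq
  rw [← RatFunc.algebraMap_C lam, ← hφ] at heq
  linear_combination heq

lemma aux_sum_count_le [DecidableEq k] (T : Finset k) (M : Multiset k) :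
    ∑ a ∈ T, M.count a ≤ Multiset.card M := by
  calc ∑ a ∈ T, M.count a = ∑ a ∈ T ∩ M.toFinset, M.count a := by
        refine (Finset.sum_subset Finset.inter_subset_left ?_).symm
        intro x hx hnx
        rw [Multiset.count_eq_zero]
        intro hmem
        exact hnx (Finset.mem_inter.mpr ⟨hx, Multiset.mem_toFinset.mpr hmem⟩)
    _ ≤ ∑ a ∈ M.toFinset, M.count a :=
        Finset.sum_le_sum_of_subset Finset.inter_subset_right
    _ = Multiset.card M := Multiset.toFinset_sum_count_eq M

lemma aux_card_roots [IsAlgClosed k] {g : k[X]} (hg : g ≠ 0) :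
    Multiset.card g.roots = g.natDegree :=
  splits_iff_card_roots.mp (IsAlgClosed.splits g)

end Aux

/-- the conductor `C` of a semi-invariant form of weight `ν ≥ 1` satisfies
`C·(d₁ − d₂) ≤ 2(d₁ − d₂) + 3(d₂ − 1)`. -/
theorem conductor_bound_semiInvariant
    {k : Type*} [Field k] [IsAlgClosed k] (σ₁ σ₂ : k[X])
    (h₁ : 0 < σ₁.natDegree) (h₂ : 0 < σ₂.natDegree)
    (ht₁ : TamelyRamified σ₁) (ht₂ : TamelyRamified σ₂)
    (hdeg : σ₂.natDegree < σ₁.natDegree)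
    (ν : ℤ) (hν : 1 ≤ ν) (f : RatFunc k) (hf : SemiInvariant σ₁ σ₂ f ν) :
    ({a : k | ordAt f a ≠ 0}.ncard : ℤ) * ((σ₁.natDegree : ℤ) - (σ₂.natDegree : ℤ))
      ≤ 2 * ((σ₁.natDegree : ℤ) - (σ₂.natDegree : ℤ)) + 3 * ((σ₂.natDegree : ℤ) - 1) := by
  classical
  set d₁ := σ₁.natDegree with hd₁
  set d₂ := σ₂.natDegree with hd₂
  have hf0 : f ≠ 0 := hf.1
  set p := f.num with hp
  set q := f.denom with hq
  have hp0 : p ≠ 0 := RatFunc.num_ne_zero hf0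
  have hq0 : q ≠ 0 := f.denom_ne_zero
  set n := ν.toNat with hn
  have hnν : (n : ℤ) = ν := Int.toNat_of_nonneg (by linarith)
  obtain ⟨lam, hlam, hpoly⟩ := semiInvariant_poly_eq n hnν h₁ h₂ hf
  set D₁ := derivative σ₁ with hD₁def
  set D₂ := derivative σ₂ with hD₂def
  obtain ⟨hD₁, hdD₁⟩ := tame_deriv_ne_zero h₁ ht₁.1
  obtain ⟨hD₂, hdD₂⟩ := tame_deriv_ne_zero h₂ ht₂.1
  rw [← hD₁def] at hD₁ hdD₁
  rw [← hD₂def] at hD₂ hdD₂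
  -- the conductor set as a finset
  have hpq0 : p * q ≠ 0 := mul_ne_zero hp0 hq0
  set S : Finset k := (p * q).roots.toFinset with hS
  have hcop : IsCoprime p q := f.isCoprime_num_denom
  have hnotboth : ∀ s : k, ¬ (p.IsRoot s ∧ q.IsRoot s) := by
    rintro s ⟨hps, hqs⟩
    obtain ⟨u, v, huv⟩ := hcop
    have := congrArg (Polynomial.eval s) huv
    simp [hps.eq_zero, hqs.eq_zero] at this
  have hSmem : ∀ s : k, s ∈ S ↔ ordAt f s ≠ 0 := by
    intro s
    rw [hS, Multiset.mem_toFinset, mem_roots hpq0]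
    unfold ordAt
    rw [← hp, ← hq]
    constructor
    · intro hroot
      rw [IsRoot, eval_mul] at hroot
      rcases mul_eq_zero.mp hroot with hps | hqs
      · have h1 : 0 < p.rootMultiplicity s := (rootMultiplicity_pos hp0).2 hps
        have h2 : q.rootMultiplicity s = 0 :=
          rootMultiplicity_eq_zero (fun hqs => hnotboth s ⟨hps, hqs⟩)
        rw [h2]
        omega
      · have h1 : 0 < q.rootMultiplicity s := (rootMultiplicity_pos hq0).2 hqs
        have h2 : p.rootMultiplicity s = 0 :=
          rootMultiplicity_eq_zero (fun hps => hnotboth s ⟨hps, hqs⟩)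
        rw [h2]
        omega
    · intro hne
      by_contra hroot
      have hnr : ¬ (p * q).IsRoot s := hroot
      rw [IsRoot, eval_mul, mul_eq_zero] at hnr
      push_neg at hnr
      have h1 : p.rootMultiplicity s = 0 := rootMultiplicity_eq_zero hnr.1
      have h2 : q.rootMultiplicity s = 0 := rootMultiplicity_eq_zero hnr.2
      rw [h1, h2] at hne
      simp at hne
  have hsetS : {a : k | ordAt f a ≠ 0} = ↑S := by
    ext a
    simp only [Set.mem_setOf_eq, Finset.coe_sort_coe, Finset.mem_coe]
    exact (hSmem a).symm
  rw [hsetS, Set.ncard_coe_finset]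
  -- local ramification indices
  set e₁ : k → ℕ := fun a => (σ₁ - C (σ₁.eval a)).rootMultiplicity a with he₁
  set e₂ : k → ℕ := fun a => (σ₂ - C (σ₂.eval a)).rootMultiplicity a with he₂
  have he₁pos : ∀ a : k, 1 ≤ e₁ a := by
    intro a
    exact (rootMultiplicity_pos (aux_sub_C_ne_zero h₁ _)).2 (by simp [IsRoot])
  have he₂pos : ∀ a : k, 1 ≤ e₂ a := by
    intro a
    exact (rootMultiplicity_pos (aux_sub_C_ne_zero h₂ _)).2 (by simp [IsRoot])
  have hrmD₁ : ∀ a : k, D₁.rootMultiplicity a + 1 = e₁ a := fun a => tame_deriv h₁ ht₁ a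
  have hrmD₂ : ∀ a : k, D₂.rootMultiplicity a + 1 = e₂ a := fun a => tame_deriv h₂ ht₂ a
  -- key pointwise equation over ℤ
  have hkey : ∀ a : k,
      (e₁ a : ℤ) * ordAt f (σ₁.eval a) + (n : ℤ) * ((e₁ a : ℤ) - 1)
        = (e₂ a : ℤ) * ordAt f (σ₂.eval a) + (n : ℤ) * ((e₂ a : ℤ) - 1) := by
    intro a
    have hA : p.comp σ₁ * q.comp σ₂ * D₁ ^ n ≠ 0 :=
      mul_ne_zero (mul_ne_zero (aux_comp_ne_zero hp0 h₁) (aux_comp_ne_zero hq0 h₂))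
        (pow_ne_zero _ hD₁)
    have hB : p.comp σ₂ * q.comp σ₁ * D₂ ^ n ≠ 0 :=
      mul_ne_zero (mul_ne_zero (aux_comp_ne_zero hp0 h₂) (aux_comp_ne_zero hq0 h₁))
        (pow_ne_zero _ hD₂)
    have hCB : C lam * (p.comp σ₂ * q.comp σ₁ * D₂ ^ n) ≠ 0 :=
      mul_ne_zero (fun h => hlam (by simpa using h)) hB
    have hrm := congrArg (rootMultiplicity a) hpoly
    rw [rootMultiplicity_mul (mul_ne_zero (mul_ne_zero (aux_comp_ne_zero hp0 h₁)
        (aux_comp_ne_zero hq0 h₂)) (pow_ne_zero _ hD₁)),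
      rootMultiplicity_mul (mul_ne_zero (aux_comp_ne_zero hp0 h₁) (aux_comp_ne_zero hq0 h₂)),
      rootMultiplicity_mul hCB,
      rootMultiplicity_mul (mul_ne_zero (mul_ne_zero (aux_comp_ne_zero hp0 h₂)
        (aux_comp_ne_zero hq0 h₁)) (pow_ne_zero _ hD₂)),
      rootMultiplicity_mul (mul_ne_zero (aux_comp_ne_zero hp0 h₂) (aux_comp_ne_zero hq0 h₁)),
      aux_rm_pow, aux_rm_pow] at hrm
    have hClam : (C lam).rootMultiplicity a = 0 :=
      rootMultiplicity_eq_zero (by simp [IsRoot, hlam])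
    rw [hClam, zero_add] at hrm
    rw [aux_rootMultiplicity_comp hp0 h₁, aux_rootMultiplicity_comp hp0 h₂,
      aux_rootMultiplicity_comp hq0 h₁, aux_rootMultiplicity_comp hq0 h₂] at hrm
    have hm1 := hrmD₁ a
    have hm2 := hrmD₂ a
    unfold ordAt
    rw [← hp, ← hq]
    have hrmN : p.rootMultiplicity (σ₁.eval a) * e₁ a
        + q.rootMultiplicity (σ₂.eval a) * e₂ a + n * D₁.rootMultiplicity a
        = p.rootMultiplicity (σ₂.eval a) * e₂ a
        + q.rootMultiplicity (σ₁.eval a) * e₁ a + n * D₂.rootMultiplicity a := hrm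
    have hrmZ := congrArg (Nat.cast (R := ℤ)) hrmN
    push_cast at hrmZ
    have hm1Z : (D₁.rootMultiplicity a : ℤ) = (e₁ a : ℤ) - 1 := by omega
    have hm2Z : (D₂.rootMultiplicity a : ℤ) = (e₂ a : ℤ) - 1 := by omega
    rw [hm1Z, hm2Z] at hrmZ
    linear_combination hrmZ
  -- fibers
  set fib₁ : k → Finset k := fun s => (σ₁ - C s).roots.toFinset with hfib₁
  set fib₂ : k → Finset k := fun s => (σ₂ - C s).roots.toFinset with hfib₂
  have hfib₁mem : ∀ s a : k, a ∈ fib₁ s ↔ σ₁.eval a = s := by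
    intro s a
    rw [hfib₁]
    simp only [Multiset.mem_toFinset, mem_roots (aux_sub_C_ne_zero h₁ s), IsRoot,
      eval_sub, eval_C, sub_eq_zero]
  have hfib₂mem : ∀ s a : k, a ∈ fib₂ s ↔ σ₂.eval a = s := by
    intro s a
    rw [hfib₂]
    simp only [Multiset.mem_toFinset, mem_roots (aux_sub_C_ne_zero h₂ s), IsRoot,
      eval_sub, eval_C, sub_eq_zero]
  set G : Finset k :=
    S.biUnion (fun s => (fib₁ s).filter (fun a => (σ₁ - C s).rootMultiplicity a = 1)) with hG
  set H : Finset k := (S.biUnion fib₂) ∪ D₂.roots.toFinset with hH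
  -- G ⊆ H
  have hGH : G ⊆ H := by
    intro a ha
    rw [hG, Finset.mem_biUnion] at ha
    obtain ⟨s, hsS, hafil⟩ := ha
    rw [Finset.mem_filter] at hafil
    obtain ⟨hafib, hrm1⟩ := hafil
    have heval : σ₁.eval a = s := (hfib₁mem s a).mp hafib
    have he₁a : e₁ a = 1 := by rw [he₁]; simp only; rw [heval]; exact hrm1
    have hord : ordAt f s ≠ 0 := (hSmem s).mp hsS
    have hk := hkey a
    rw [heval, he₁a] at hk
    simp only [Nat.cast_one, one_mul, sub_self, mul_zero, add_zero] at hk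
    by_cases he : e₂ a = 1
    · rw [he] at hk
      simp only [Nat.cast_one, one_mul, sub_self, mul_zero, add_zero] at hk
      have hord₂ : ordAt f (σ₂.eval a) ≠ 0 := by rw [← hk]; exact hord
      rw [hH, Finset.mem_union]
      left
      rw [Finset.mem_biUnion]
      exact ⟨σ₂.eval a, (hSmem _).mpr hord₂, (hfib₂mem _ a).mpr rfl⟩
    · have he2 : 2 ≤ e₂ a := by have := he₂pos a; omega
      have : 1 ≤ D₂.rootMultiplicity a := by have := hrmD₂ a; omega
      have hroot : D₂.IsRoot a := (rootMultiplicity_pos hD₂).1 (by omega)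
      rw [hH, Finset.mem_union]
      right
      rw [Multiset.mem_toFinset, mem_roots hD₂]
      exact hroot
  -- cardinality of H
  have hcardH : H.card ≤ S.card * d₂ + (d₂ - 1) := by
    have h1 : (S.biUnion fib₂).card ≤ S.card * d₂ := by
      refine le_trans (Finset.card_biUnion_le) ?_
      rw [← Finset.sum_const_nat (m := d₂) (fun _ _ => rfl)] at *
      refine Finset.sum_le_sum (fun s _ => ?_)
      calc (fib₂ s).card ≤ Multiset.card (σ₂ - C s).roots := Multiset.toFinset_card_le _
        _ ≤ (σ₂ - C s).natDegree := card_roots' _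
        _ = d₂ := natDegree_sub_C
    have h2 : D₂.roots.toFinset.card ≤ d₂ - 1 := by
      calc D₂.roots.toFinset.card ≤ Multiset.card D₂.roots := Multiset.toFinset_card_le _
        _ ≤ D₂.natDegree := card_roots' _
        _ = d₂ - 1 := hdD₂
    calc H.card ≤ (S.biUnion fib₂).card + D₂.roots.toFinset.card := Finset.card_union_le _ _
      _ ≤ S.card * d₂ + (d₂ - 1) := Nat.add_le_add h1 h2
  -- cardinality of G (lower bound)
  have hdisj : ∀ s ∈ S, ∀ t ∈ S, s ≠ t →
      Disjoint ((fib₁ s).filter (fun a => (σ₁ - C s).rootMultiplicity a = 1))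
        ((fib₁ t).filter (fun a => (σ₁ - C t).rootMultiplicity a = 1)) := by
    intro s _ t _ hst
    refine Finset.disjoint_left.mpr (fun a has hat => ?_)
    have h1 := (hfib₁mem s a).mp (Finset.mem_filter.mp has).1
    have h2 := (hfib₁mem t a).mp (Finset.mem_filter.mp hat).1
    exact hst (h1 ▸ h2 ▸ rfl)
  have hcardG : G.card
      = ∑ s ∈ S, ((fib₁ s).filter (fun a => (σ₁ - C s).rootMultiplicity a = 1)).card :=
    Finset.card_biUnion hdisj
  -- per-fiber lower bound
  have hfibsum : ∀ s : k, ∑ a ∈ fib₁ s, (σ₁ - C s).rootMultiplicity a = d₁ := by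
    intro s
    have := Multiset.toFinset_sum_count_eq (σ₁ - C s).roots
    rw [aux_card_roots (aux_sub_C_ne_zero h₁ s)] at this
    rw [hd₁, ← natDegree_sub_C (p := σ₁) (a := s), ← this]
    refine Finset.sum_congr rfl (fun a _ => (count_roots _).symm)
  have hperfiber : ∀ s : k,
      d₁ ≤ ((fib₁ s).filter (fun a => (σ₁ - C s).rootMultiplicity a = 1)).card
        + 2 * ∑ a ∈ fib₁ s, ((σ₁ - C s).rootMultiplicity a - 1) := by
    intro s
    set F := fib₁ s with hF
    have hge1 : ∀ a ∈ F, 1 ≤ (σ₁ - C s).rootMultiplicity a := by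
      intro a haF
      have haF' : a ∈ (σ₁ - C s).roots.toFinset := haF
      have : (σ₁ - C s).IsRoot a :=
        (mem_roots (aux_sub_C_ne_zero h₁ s)).mp (Multiset.mem_toFinset.mp haF')
      exact (rootMultiplicity_pos (aux_sub_C_ne_zero h₁ s)).2 this
    have hsplit : F.card = (F.filter (fun a => (σ₁ - C s).rootMultiplicity a = 1)).card
        + (F.filter (fun a => ¬ (σ₁ - C s).rootMultiplicity a = 1)).card :=
      (Finset.card_filter_add_card_filter_not _).symm
    have hbad : (F.filter (fun a => ¬ (σ₁ - C s).rootMultiplicity a = 1)).card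
        ≤ ∑ a ∈ F, ((σ₁ - C s).rootMultiplicity a - 1) := by
      calc (F.filter (fun a => ¬ (σ₁ - C s).rootMultiplicity a = 1)).card
          = ∑ a ∈ F.filter (fun a => ¬ (σ₁ - C s).rootMultiplicity a = 1), 1 := by
            rw [Finset.card_eq_sum_ones]
        _ ≤ ∑ a ∈ F.filter (fun a => ¬ (σ₁ - C s).rootMultiplicity a = 1),
              ((σ₁ - C s).rootMultiplicity a - 1) := by
            refine Finset.sum_le_sum (fun a ha => ?_)
            have h1 := hge1 a (Finset.mem_filter.mp ha).1
            have h2 := (Finset.mem_filter.mp ha).2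
            omega
        _ ≤ ∑ a ∈ F, ((σ₁ - C s).rootMultiplicity a - 1) :=
            Finset.sum_le_sum_of_subset (Finset.filter_subset _ _)
    have hsum : ∑ a ∈ F, (σ₁ - C s).rootMultiplicity a = d₁ := hfibsum s
    have hFcard : F.card + ∑ a ∈ F, ((σ₁ - C s).rootMultiplicity a - 1) = d₁ := by
      rw [← hsum, Finset.card_eq_sum_ones, ← Finset.sum_add_distrib]
      refine Finset.sum_congr rfl (fun a ha => ?_)
      have := hge1 a ha
      omega
    omega
  -- total ramification bound
  have hramsum : ∑ s ∈ S, ∑ a ∈ fib₁ s, ((σ₁ - C s).rootMultiplicity a - 1) ≤ d₁ - 1 := by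
    have hpt : ∀ s ∈ S, ∀ a ∈ fib₁ s,
        (σ₁ - C s).rootMultiplicity a - 1 = D₁.roots.count a := by
      intro s _ a ha
      have heval : σ₁.eval a = s := (hfib₁mem s a).mp ha
      have := hrmD₁ a
      rw [he₁] at this
      simp only at this
      rw [heval] at this
      rw [count_roots]
      omega
    calc ∑ s ∈ S, ∑ a ∈ fib₁ s, ((σ₁ - C s).rootMultiplicity a - 1)
        = ∑ s ∈ S, ∑ a ∈ fib₁ s, D₁.roots.count a := by
          refine Finset.sum_congr rfl (fun s hs => Finset.sum_congr rfl (hpt s hs))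
      _ = ∑ a ∈ S.biUnion fib₁, D₁.roots.count a := by
          refine (Finset.sum_biUnion ?_).symm
          intro s hs t ht hst
          refine Finset.disjoint_left.mpr (fun a has hat => ?_)
          exact hst ((hfib₁mem s a).mp has ▸ (hfib₁mem t a).mp hat ▸ rfl)
      _ ≤ Multiset.card D₁.roots := aux_sum_count_le _ _
      _ ≤ D₁.natDegree := card_roots' _
      _ = d₁ - 1 := hdD₁
  -- combine counts
  have hmain : S.card * d₁ ≤ S.card * d₂ + (d₂ - 1) + 2 * (d₁ - 1) := by
    have h1 : S.card * d₁ ≤ G.card + 2 * (d₁ - 1) := by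
      calc S.card * d₁ = ∑ _s ∈ S, d₁ := by rw [Finset.sum_const, smul_eq_mul]
        _ ≤ ∑ s ∈ S, (((fib₁ s).filter (fun a => (σ₁ - C s).rootMultiplicity a = 1)).card
              + 2 * ∑ a ∈ fib₁ s, ((σ₁ - C s).rootMultiplicity a - 1)) :=
            Finset.sum_le_sum (fun s _ => hperfiber s)
        _ = G.card + 2 * ∑ s ∈ S, ∑ a ∈ fib₁ s, ((σ₁ - C s).rootMultiplicity a - 1) := by
            rw [Finset.sum_add_distrib, hcardG, Finset.mul_sum]
        _ ≤ G.card + 2 * (d₁ - 1) := by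
            have := hramsum
            omega
    have h2 : G.card ≤ H.card := Finset.card_le_card hGH
    omega
  -- conclude
  have hd₁1 : 1 ≤ d₁ := h₁
  have hd₂1 : 1 ≤ d₂ := h₂
  have hZ : (S.card : ℤ) * d₁ ≤ S.card * d₂ + ((d₂ : ℤ) - 1) + 2 * ((d₁ : ℤ) - 1) := by
    have := hmain
    have hcast : ((S.card * d₁ : ℕ) : ℤ) ≤ ((S.card * d₂ + (d₂ - 1) + 2 * (d₁ - 1) : ℕ) : ℤ) :=
      Int.ofNat_le.mpr this
    push_cast [Nat.cast_sub hd₁1, Nat.cast_sub hd₂1] at hcast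
    linarith
  linarith
end

section
/- Let k be an algebraically closed field and let σ₁, σ₂ ∈ k[t] be nonconstant tamely ramified polynomials such that σ₁′·σ₂ = l·σ₂′·σ₁ in k[t] for some l ∈ k∖{0}. Then there exist distinct points α₁, …, α_n ∈ k, positive integers e₁, …, e_n and f₁, …, f_n, and constants λ₁, λ₂ ∈ k∖{0} such that σ₁(t) = λ₁·∏_{i=1}^n (t − α_i)^{e_i} and σ₂(t) = λ₂·∏_{i=1}^n (t − α_i)^{f_i}. -/
open Polynomial

lemma deriv_ne_zero_of_tame {k : Type*} [Field k] (σ : k[X])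
    (h : 0 < σ.natDegree) (ht : ¬ ringChar k ∣ σ.natDegree) : derivative σ ≠ 0 := by
  intro h0
  have hc : (derivative σ).coeff (σ.natDegree - 1) = 0 := by rw [h0]; simp
  rw [coeff_derivative] at hc
  rw [Nat.sub_add_cancel h] at hc
  have hd : (σ.natDegree : k) ≠ 0 := fun h0 => ht ((ringChar.spec k _).mp h0)
  have hlc : σ.coeff σ.natDegree ≠ 0 := by
    rw [← leadingCoeff]
    exact leadingCoeff_ne_zero.mpr (fun h0 => by simp [h0] at h)
  have : (↑(σ.natDegree - 1) + 1 : k) = (σ.natDegree : k) := by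
    rw [Nat.cast_sub h, Nat.cast_one]; ring
  rw [this] at hc
  exact hlc (by rcases mul_eq_zero.mp hc with h | h; exact h; exact absurd h hd)

lemma tame_derivative_rootMultiplicity {k : Type*} [Field k] {σ : k[X]} {a : k}
    (ht : TamelyRamified σ) (ha : σ.IsRoot a) :
    rootMultiplicity a (derivative σ) = rootMultiplicity a σ - 1 := by
  apply derivative_rootMultiplicity_of_root_of_mem_nonZeroDivisors ha
  rw [mem_nonZeroDivisors_iff_ne_zero]
  intro h0
  refine ht.2 0 a (by simpa using ha) ?_
  rw [(by simp : σ - C (0 : k) = σ)]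
  exact (ringChar.spec k _).mp h0

lemma roots_subset_aux {k : Type*} [Field k] (σ₁ σ₂ : k[X])
    (hσ₂0 : σ₂ ≠ 0) (hd₁ : derivative σ₁ ≠ 0) (hd₂ : derivative σ₂ ≠ 0)
    (ht₁ : TamelyRamified σ₁) (l : k) (hl : l ≠ 0)
    (heq : derivative σ₁ * σ₂ = C l * (derivative σ₂ * σ₁))
    {a : k} (ha : σ₁.IsRoot a) : σ₂.IsRoot a := by
  have hσ₁0 : σ₁ ≠ 0 := fun h => hd₁ (by simp [h])
  by_contra hb
  have he : 0 < rootMultiplicity a σ₁ := (rootMultiplicity_pos hσ₁0).2 ha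
  have hder := tame_derivative_rootMultiplicity ht₁ ha
  have h2 : rootMultiplicity a σ₂ = 0 := rootMultiplicity_eq_zero hb
  have hCl : rootMultiplicity a (C l) = 0 :=
    rootMultiplicity_eq_zero (not_isRoot_C _ _ hl)
  have hkey := congrArg (rootMultiplicity a) heq
  rw [rootMultiplicity_mul (mul_ne_zero hd₁ hσ₂0),
    rootMultiplicity_mul (mul_ne_zero (fun h => hl (by simpa using congrArg (·.coeff 0) h))
      (mul_ne_zero hd₂ hσ₁0)),
    rootMultiplicity_mul (mul_ne_zero hd₂ hσ₁0), hder, h2, hCl] at hkey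
  omega

lemma factor_aux {k : Type*} [Field k] [IsAlgClosed k] [DecidableEq k] (p : k[X]) (hp : p ≠ 0) :
    p = C p.leadingCoeff *
      ∏ a ∈ p.roots.toFinset, (X - C a) ^ (rootMultiplicity a p) := by
  conv_lhs => rw [← C_leadingCoeff_mul_prod_multiset_X_sub_C
    ((splits_iff_card_roots).mp (IsAlgClosed.splits p))]
  rw [prod_multiset_root_eq_finset_root]

/-- if `σ₁'·σ₂ = l·σ₂'·σ₁` for some nonzero constant `l`, with `σ₁, σ₂`
nonconstant tamely ramified polynomials over an algebraically closed field, then `σ₁` and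
`σ₂` factor as `σ₁ = λ₁·∏ (t − αᵢ)^{eᵢ}` and `σ₂ = λ₂·∏ (t − αᵢ)^{fᵢ}` over a common set of
distinct points `α₁, …, α_n`, with all exponents positive. -/
theorem common_factorisation_of_flat_semiInvariant
    {k : Type*} [Field k] [IsAlgClosed k] (σ₁ σ₂ : k[X])
    (h₁ : 0 < σ₁.natDegree) (h₂ : 0 < σ₂.natDegree)
    (ht₁ : TamelyRamified σ₁) (ht₂ : TamelyRamified σ₂)
    (l : k) (hl : l ≠ 0)
    (heq : derivative σ₁ * σ₂ = C l * (derivative σ₂ * σ₁)) :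
    ∃ (n : ℕ) (α : Fin n → k) (e f : Fin n → ℕ) (lam₁ lam₂ : k),
      Function.Injective α ∧ (∀ i, 0 < e i) ∧ (∀ i, 0 < f i) ∧
      lam₁ ≠ 0 ∧ lam₂ ≠ 0 ∧
      σ₁ = C lam₁ * ∏ i, (X - C (α i)) ^ (e i) ∧
      σ₂ = C lam₂ * ∏ i, (X - C (α i)) ^ (f i) := by
  classical
  have hσ₁0 : σ₁ ≠ 0 := fun h => by simp [h] at h₁
  have hσ₂0 : σ₂ ≠ 0 := fun h => by simp [h] at h₂
  have hd₁ : derivative σ₁ ≠ 0 := deriv_ne_zero_of_tame σ₁ h₁ ht₁.1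
  have hd₂ : derivative σ₂ ≠ 0 := deriv_ne_zero_of_tame σ₂ h₂ ht₂.1
  have heq' : derivative σ₂ * σ₁ = C l⁻¹ * (derivative σ₁ * σ₂) := by
    rw [heq, ← mul_assoc, ← C_mul, inv_mul_cancel₀ hl, C_1, one_mul]
  have hsub₁ : ∀ a : k, σ₁.IsRoot a → σ₂.IsRoot a := fun a ha =>
    roots_subset_aux σ₁ σ₂ hσ₂0 hd₁ hd₂ ht₁ l hl heq ha
  have hsub₂ : ∀ a : k, σ₂.IsRoot a → σ₁.IsRoot a := fun a ha =>
    roots_subset_aux σ₂ σ₁ hσ₁0 hd₂ hd₁ ht₂ l⁻¹ (inv_ne_zero hl) heq' ha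
  have hroots : σ₂.roots.toFinset = σ₁.roots.toFinset := by
    ext a
    simp only [Multiset.mem_toFinset, mem_roots, hσ₁0, hσ₂0, ne_eq, not_false_iff, true_and]
    exact ⟨hsub₂ a, hsub₁ a⟩
  set S := σ₁.roots.toFinset with hS
  set n := S.card with hn
  set α : Fin n → k := fun i => ((S.equivFin.symm i : S) : k) with hα
  have hmem : ∀ i, α i ∈ S := fun i => (S.equivFin.symm i).2
  have hroot₁ : ∀ i, σ₁.IsRoot (α i) := fun i => by
    have := hmem i
    rw [hS, Multiset.mem_toFinset, mem_roots hσ₁0] at this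
    exact this
  have hroot₂ : ∀ i, σ₂.IsRoot (α i) := fun i => hsub₁ _ (hroot₁ i)
  refine ⟨n, α, fun i => rootMultiplicity (α i) σ₁, fun i => rootMultiplicity (α i) σ₂,
    σ₁.leadingCoeff, σ₂.leadingCoeff, ?_, ?_, ?_, ?_, ?_, ?_, ?_⟩
  · intro i j hij
    exact S.equivFin.symm.injective (Subtype.ext hij)
  · exact fun i => (rootMultiplicity_pos hσ₁0).2 (hroot₁ i)
  · exact fun i => (rootMultiplicity_pos hσ₂0).2 (hroot₂ i)
  · exact leadingCoeff_ne_zero.mpr hσ₁0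
  · exact leadingCoeff_ne_zero.mpr hσ₂0
  · rw [show (∏ i, (X - C (α i)) ^ (rootMultiplicity (α i) σ₁))
        = ∏ a ∈ S, (X - C a) ^ (rootMultiplicity a σ₁) by
      rw [← Finset.prod_coe_sort S (fun a => (X - C (a : k)) ^ (rootMultiplicity (a : k) σ₁))]
      exact Equiv.prod_comp S.equivFin.symm
        (fun x : S => (X - C (x : k)) ^ (rootMultiplicity (x : k) σ₁))]
    exact factor_aux σ₁ hσ₁0
  · rw [show (∏ i, (X - C (α i)) ^ (rootMultiplicity (α i) σ₂))
        = ∏ a ∈ S, (X - C a) ^ (rootMultiplicity a σ₂) by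
      rw [← Finset.prod_coe_sort S (fun a => (X - C (a : k)) ^ (rootMultiplicity (a : k) σ₂))]
      exact Equiv.prod_comp S.equivFin.symm
        (fun x : S => (X - C (x : k)) ^ (rootMultiplicity (x : k) σ₂))]
    rw [← hroots]
    exact factor_aux σ₂ hσ₂0
end
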